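/- In the 3-dimensional example, the sectional curvature k(x, y) = R(x,y,y,x) / (g(x,x)g(y,y) - g(x,y)²), where R(x,y,z,w) = g(∇ₓ∇_y z - ∇_y∇ₓ z - ∇_{[x,y]} z, w), takes the value -1 on the φ-holomorphic section spanned by {e₁, e₂} and the value +1 on the ξ-sections spanned by {e₁, e₃} and by {e₂, e₃}. -/

import Mathlib

noncomputable section

/-- The underlying 3-dimensional real vector space. -/
abbrev V3 := Fin 3 → ℝ

/-- The basis `(e₁, e₂, e₃)` (standard basis of `ℝ³`). -/
def e3 (i : Fin 3) : V3 := Pi.single i 1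

/-- The Lie bracket: the bilinear extension of
`[e₃, e₁] = e₂`, `[e₃, e₂] = -e₁`, `[e₁, e₂] = 0`. -/
def br3 (x y : V3) : V3 :=
  ![x 1 * y 2 - x 2 * y 1, x 2 * y 0 - x 0 * y 2, 0]

/-- The B-metric `g`: `g(e₁,e₁) = 1`, `g(e₂,e₂) = -1`, `g(e₃,e₃) = 1`,
`g(eᵢ,eⱼ) = 0` for `i ≠ j`. -/
def gM3 (x y : V3) : ℝ := x 0 * y 0 - x 1 * y 1 + x 2 * y 2

/-- The structure endomorphism `φ`: `φe₁ = e₂`, `φe₂ = -e₁`, `φe₃ = 0`. -/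
def phi3 (x : V3) : V3 := ![-(x 1), x 0, 0]

/-- The Reeb vector field `ξ = e₃`. -/
def xi3 : V3 := e3 2

/-- The contact form `η`: `η(e₁) = η(e₂) = 0`, `η(e₃) = 1`. -/
def eta3 (x : V3) : ℝ := x 2

/-- The Koszul formula for the Levi-Civita connection of a left-invariant metric. -/
def Koszul3 (nabla : V3 → V3 → V3) : Prop :=
  ∀ x y z : V3,
    2 * gM3 (nabla x y) z = gM3 (br3 x y) z - gM3 (br3 y z) x + gM3 (br3 z x) y

/-- The curvature tensor `R(x,y)z = ∇ₓ∇_y z - ∇_y ∇ₓ z - ∇_{[x,y]} z`. -/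
def R3 (nabla : V3 → V3 → V3) (x y z : V3) : V3 :=
  nabla x (nabla y z) - nabla y (nabla x z) - nabla (br3 x y) z

/-- The Ricci tensor `ρ(y,z)`: the trace of the map `x ↦ R(x,y)z`,
computed in the standard basis. -/
def ric3 (nabla : V3 → V3 → V3) (y z : V3) : ℝ :=
  ∑ i : Fin 3, R3 nabla (e3 i) y z i

/-- The sectional curvature `k(x,y) = R(x,y,y,x)/(g(x,x)g(y,y) - g(x,y)²)`
of the 3-dimensional example. -/
def sec3 (nabla : V3 → V3 → V3) (x y : V3) : ℝ :=
  gM3 (R3 nabla x y y) x / (gM3 x x * gM3 y y - (gM3 x y) ^ 2)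


lemma nabla_formula (nabla : V3 → V3 → V3) (hK : Koszul3 nabla) (x y : V3) :
    nabla x y = ![x 1 * y 2, -(x 0 * y 2), -(x 0 * y 1 + x 1 * y 0)] := by
  have h0 := hK x y (e3 0)
  have h1 := hK x y (e3 1)
  have h2 := hK x y (e3 2)
  simp [gM3, br3, e3, Pi.single_apply] at h0 h1 h2
  funext i
  fin_cases i <;> simp <;> linarith

/-- In the 3-dimensional example, the sectional curvature is `-1` on the φ-holomorphic
section `span{e₁, e₂}` and `+1` on the ξ-sections `span{e₁, e₃}` and `span{e₂, e₃}`. -/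
theorem sectional_curvatures_3dim (nabla : V3 → V3 → V3) (hK : Koszul3 nabla) :
    sec3 nabla (e3 0) (e3 1) = -1 ∧
    sec3 nabla (e3 0) (e3 2) = 1 ∧
    sec3 nabla (e3 1) (e3 2) = 1 := by
  refine ⟨?_, ?_, ?_⟩ <;>
  · simp only [sec3, R3, nabla_formula nabla hK, gM3, br3, e3, Pi.single_apply]
    norm_num [Matrix.cons_val_zero, Matrix.cons_val_one, Matrix.head_cons, Matrix.cons_val_two,
      show (2:Fin 3) ≠ 1 from by decide, show (2:Fin 3) ≠ 0 from by decide,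
      show (1:Fin 3) ≠ 2 from by decide, show (0:Fin 3) ≠ 2 from by decide]
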